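/- A strictly hyperideal triangle is determined up to hyperbolic isometry by its three edge lengths: for any positive real numbers l₁, l₂, l₃ there is at most one hyperideal triangle (up to isometries of H² extended to the projective plane) with edge lengths l₁, l₂, l₃; moreover such a triangle admits no nontrivial infinitesimal deformation preserving its edge lengths. -/

import Mathlib

open scoped RealInnerProductSpace

abbrev E2 := EuclideanSpace ℝ (Fin 2)

/-- The Minkowski bilinear form on `ℝ³` (signature `(-,+,+)`). -/
def mink3 (x y : Fin 3 → ℝ) : ℝ := -(x 0 * y 0) + x 1 * y 1 + x 2 * y 2

/-- The homogeneous lift `(1, p)` of a point `p` of the projective model plane. -/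
def lift2 (p : E2) : Fin 3 → ℝ := ![1, p 0, p 1]

/-- A strictly hyperideal triangle in the projective model: three affinely independent
points outside the closed unit disk, each edge meeting the open disk. -/
def IsStrictHyperidealTriangle (v : Fin 3 → E2) : Prop :=
  AffineIndependent ℝ v ∧ (∀ i, 1 < ‖v i‖) ∧
  ∀ i j, i ≠ j → ∃ t ∈ Set.Ioo (0 : ℝ) 1, ‖v i + t • (v j - v i)‖ < 1

/-- The edge length of a strictly hyperideal triangle: the hyperbolic distance between
the dual geodesics of the two endpoints (the length of the corresponding 'real edge'
of the truncated right-angled hexagon),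
`cosh ℓ = |⟪p,q⟫ - 1| / (√(‖p‖²-1) √(‖q‖²-1))`. -/
noncomputable def hlen2 (p q : E2) : ℝ :=
  Real.log (|⟪p, q⟫ - 1| / (Real.sqrt (‖p‖ ^ 2 - 1) * Real.sqrt (‖q‖ ^ 2 - 1)) +
    Real.sqrt ((|⟪p, q⟫ - 1| / (Real.sqrt (‖p‖ ^ 2 - 1) * Real.sqrt (‖q‖ ^ 2 - 1))) ^ 2 - 1))

lemma inner_E2 (p q : E2) : ⟪p, q⟫ = p 0 * q 0 + p 1 * q 1 := by
  simp [PiLp.inner_apply, RCLike.inner_apply, Fin.sum_univ_two]; ring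

lemma mink3_lift (p q : E2) : mink3 (lift2 p) (lift2 q) = ⟪p, q⟫ - 1 := by
  simp [mink3, lift2, inner_E2]; ring

lemma norm_sq_E2 (p : E2) : ‖p‖ ^ 2 = p 0 ^ 2 + p 1 ^ 2 := by
  rw [← real_inner_self_eq_norm_sq, inner_E2]; ring

lemma lift2_li {v : Fin 3 → E2} (h : AffineIndependent ℝ v) :
    LinearIndependent ℝ (fun i => lift2 (v i)) := by
  rw [Fintype.linearIndependent_iff]
  intro g hg i
  have h0 : ∑ i, g i = 0 := by
    have := congrFun hg 0
    simpa [lift2, Fin.sum_univ_three] using this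
  refine affineIndependent_iff.1 h Finset.univ g (by simpa using h0) ?_ i (Finset.mem_univ i)
  have h1 : ∑ i, g i * v i 0 = 0 := by
    have := congrFun hg 1
    simpa [lift2, Fin.sum_univ_three] using this
  have h2 : ∑ i, g i * v i 1 = 0 := by
    have := congrFun hg 2
    simpa [lift2, Fin.sum_univ_three] using this
  ext k
  fin_cases k
  · simpa [WithLp.ofLp_sum, Finset.sum_apply, Fin.sum_univ_three, PiLp.smul_apply, smul_eq_mul] using h1
  · simpa [WithLp.ofLp_sum, Finset.sum_apply, Fin.sum_univ_three, PiLp.smul_apply, smul_eq_mul] using h2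

set_option maxHeartbeats 1000000 in
lemma seg_mink {v : Fin 3 → E2} (hv : ∀ i, 1 < ‖v i‖)
    (hseg : ∀ i j, i ≠ j → ∃ t ∈ Set.Ioo (0 : ℝ) 1, ‖v i + t • (v j - v i)‖ < 1)
    {i j : Fin 3} (hij : i ≠ j) :
    ⟪v i, v j⟫ - 1 < 0 ∧
      (‖v i‖ ^ 2 - 1) * (‖v j‖ ^ 2 - 1) < (⟪v i, v j⟫ - 1) ^ 2 := by
  obtain ⟨t, ⟨ht0, ht1⟩, hx⟩ := hseg i j hij
  have hQi : (0:ℝ) < ‖v i‖ ^ 2 - 1 := by nlinarith [hv i, norm_nonneg (v i)]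
  have hQj : (0:ℝ) < ‖v j‖ ^ 2 - 1 := by nlinarith [hv j, norm_nonneg (v j)]
  have hx2 : ‖v i + t • (v j - v i)‖ ^ 2 < 1 := by
    nlinarith [norm_nonneg (v i + t • (v j - v i))]
  rw [norm_sq_E2] at hx2 hQi hQj
  rw [inner_E2, norm_sq_E2 (v i), norm_sq_E2 (v j)]
  have e0 : (v i + t • (v j - v i)) 0 = v i 0 + t * (v j 0 - v i 0) := by
    simp [mul_sub]
  have e1 : (v i + t • (v j - v i)) 1 = v i 1 + t * (v j 1 - v i 1) := by
    simp [mul_sub]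
  rw [e0, e1] at hx2
  set a0 := v i 0; set a1 := v i 1; set b0 := v j 0; set b1 := v j 1
  have key : (1-t)^2 * (a0^2+a1^2-1) + 2*(1-t)*t*(a0*b0+a1*b1-1)
      + t^2 * (b0^2+b1^2-1) < 0 := by nlinarith [hx2]
  have htt : 0 < (1-t)*t := by nlinarith
  have hm : a0*b0+a1*b1-1 < 0 := by
    by_contra hc
    push_neg at hc
    have h2 : 0 ≤ 2*(1-t)*t*(a0*b0+a1*b1-1) :=
      mul_nonneg (by nlinarith : (0:ℝ) ≤ 2*(1-t)*t) hc
    linarith [key, h2, mul_nonneg (sq_nonneg (1-t)) hQi.le, mul_nonneg (sq_nonneg t) hQj.le]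
  refine ⟨hm, ?_⟩
  have hS : 0 < (1-t)^2*(a0^2+a1^2-1) + t^2*(b0^2+b1^2-1) := by
    have hA : 0 < (1-t)^2 * (a0^2+a1^2-1) := mul_pos (pow_pos (by linarith) 2) hQi
    have hB : 0 < t^2 * (b0^2+b1^2-1) := mul_pos (pow_pos ht0 2) hQj
    linarith
  have h4 : (1-t)^2*(a0^2+a1^2-1) + t^2*(b0^2+b1^2-1)
      < 2*(1-t)*t*(-(a0*b0+a1*b1-1)) := by linarith [key]
  nlinarith [mul_lt_mul'' h4 h4 hS.le hS.le,
    sq_nonneg ((1-t)^2*(a0^2+a1^2-1) - t^2*(b0^2+b1^2-1)), htt, mul_pos htt htt]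

lemma phi_lt {t₁ t₂ : ℝ} (h1 : 1 < t₁) (h : t₁ < t₂) :
    t₁ + Real.sqrt (t₁^2-1) < t₂ + Real.sqrt (t₂^2-1) := by
  have : Real.sqrt (t₁^2-1) ≤ Real.sqrt (t₂^2-1) := by
    apply Real.sqrt_le_sqrt; nlinarith
  linarith

lemma phi_inj {t₁ t₂ : ℝ} (h1 : 1 < t₁) (h2 : 1 < t₂)
    (h : Real.log (t₁ + Real.sqrt (t₁^2-1)) = Real.log (t₂ + Real.sqrt (t₂^2-1))) :
    t₁ = t₂ := by
  have p1 : 0 < t₁ + Real.sqrt (t₁^2-1) := by positivity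
  have p2 : 0 < t₂ + Real.sqrt (t₂^2-1) := by positivity
  have he : t₁ + Real.sqrt (t₁^2-1) = t₂ + Real.sqrt (t₂^2-1) := by
    rw [← Real.exp_log p1, ← Real.exp_log p2, h]
  rcases lt_trichotomy t₁ t₂ with hlt | heq | hgt
  · exact absurd he (ne_of_lt (phi_lt h1 hlt))
  · exact heq
  · exact absurd he.symm (ne_of_lt (phi_lt h2 hgt))

def minkB : (Fin 3 → ℝ) →ₗ[ℝ] (Fin 3 → ℝ) →ₗ[ℝ] ℝ :=
  LinearMap.mk₂ ℝ mink3
    (fun x y z => by simp [mink3]; ring)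
    (fun a x y => by simp [mink3]; ring)
    (fun x y z => by simp [mink3]; ring)
    (fun a x y => by simp [mink3]; ring)

lemma mink3_smul_left (a : ℝ) (x y : Fin 3 → ℝ) : mink3 (a • x) y = a * mink3 x y := by
  simp [mink3]; ring

lemma mink3_smul_right (a : ℝ) (x y : Fin 3 → ℝ) : mink3 x (a • y) = a * mink3 x y := by
  simp [mink3]; ring

lemma mink_basis_ext (b : Module.Basis (Fin 3) ℝ (Fin 3 → ℝ)) (g : (Fin 3 → ℝ) →ₗ[ℝ] (Fin 3 → ℝ))
    (h : ∀ i j, mink3 (g (b i)) (g (b j)) = mink3 (b i) (b j)) :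
    ∀ x y, mink3 (g x) (g y) = mink3 x y := by
  have he : minkB.compl₁₂ g g = minkB :=
    b.ext fun i => b.ext fun j => by
      simpa [LinearMap.compl₁₂_apply, minkB, LinearMap.mk₂_apply] using h i j
  intro x y
  have := LinearMap.congr_fun (LinearMap.congr_fun he x) y
  simpa [LinearMap.compl₁₂_apply, minkB, LinearMap.mk₂_apply] using this

lemma mink_skew_ext (b : Module.Basis (Fin 3) ℝ (Fin 3 → ℝ)) (B : (Fin 3 → ℝ) →ₗ[ℝ] (Fin 3 → ℝ))
    (h : ∀ i j, mink3 (B (b i)) (b j) + mink3 (b i) (B (b j)) = 0) :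
    ∀ x y, mink3 (B x) y + mink3 x (B y) = 0 := by
  have he : minkB.compl₁₂ B LinearMap.id + minkB.compl₁₂ LinearMap.id B = 0 :=
    b.ext fun i => b.ext fun j => by
      simpa [LinearMap.compl₁₂_apply, minkB, LinearMap.mk₂_apply] using h i j
  intro x y
  have := LinearMap.congr_fun (LinearMap.congr_fun he x) y
  simpa [LinearMap.compl₁₂_apply, minkB, LinearMap.mk₂_apply] using this

lemma part1 (v w : Fin 3 → E2) (hv : IsStrictHyperidealTriangle v)
    (hw : IsStrictHyperidealTriangle w)
    (hL : ∀ i j, i ≠ j → hlen2 (v i) (v j) = hlen2 (w i) (w j)) :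
    ∃ g : (Fin 3 → ℝ) →ₗ[ℝ] (Fin 3 → ℝ),
      (∀ x y, mink3 (g x) (g y) = mink3 x y) ∧
      ∀ i, ∃ c : ℝ, c ≠ 0 ∧ g (lift2 (v i)) = c • lift2 (w i) := by
  obtain ⟨hva, hvn, hvs⟩ := hv
  obtain ⟨hwa, hwn, hws⟩ := hw
  set rv : Fin 3 → ℝ := fun i => Real.sqrt (‖v i‖ ^ 2 - 1) with hrv_def
  set rw : Fin 3 → ℝ := fun i => Real.sqrt (‖w i‖ ^ 2 - 1) with hrw_def
  have hQv : ∀ i, 0 < ‖v i‖ ^ 2 - 1 := fun i => by nlinarith [hvn i, norm_nonneg (v i)]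
  have hQw : ∀ i, 0 < ‖w i‖ ^ 2 - 1 := fun i => by nlinarith [hwn i, norm_nonneg (w i)]
  have hrv : ∀ i, 0 < rv i := fun i => Real.sqrt_pos.2 (hQv i)
  have hrw : ∀ i, 0 < rw i := fun i => Real.sqrt_pos.2 (hQw i)
  have hrv2 : ∀ i, rv i ^ 2 = ‖v i‖ ^ 2 - 1 := fun i => Real.sq_sqrt (hQv i).le
  have hrw2 : ∀ i, rw i ^ 2 = ‖w i‖ ^ 2 - 1 := fun i => Real.sq_sqrt (hQw i).le
  -- gram relation for i ≠ j
  have gram : ∀ i j, i ≠ j →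
      (⟪v i, v j⟫ - 1) * (rw i * rw j) = (⟪w i, w j⟫ - 1) * (rv i * rv j) := by
    intro i j hij
    obtain ⟨hmv, hdv⟩ := seg_mink hvn hvs hij
    obtain ⟨hmw, hdw⟩ := seg_mink hwn hws hij
    have hTv : 1 < |⟪v i, v j⟫ - 1| / (rv i * rv j) := by
      rw [lt_div_iff₀ (mul_pos (hrv i) (hrv j)), one_mul, abs_of_neg hmv]
      nlinarith [hrv2 i, hrv2 j, hrv i, hrv j, mul_pos (hrv i) (hrv j)]
    have hTw : 1 < |⟪w i, w j⟫ - 1| / (rw i * rw j) := by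
      rw [lt_div_iff₀ (mul_pos (hrw i) (hrw j)), one_mul, abs_of_neg hmw]
      nlinarith [hrw2 i, hrw2 j, hrw i, hrw j, mul_pos (hrw i) (hrw j)]
    have hT : |⟪v i, v j⟫ - 1| / (rv i * rv j) = |⟪w i, w j⟫ - 1| / (rw i * rw j) :=
      phi_inj hTv hTw (hL i j hij)
    rw [abs_of_neg hmv, abs_of_neg hmw, div_eq_div_iff (mul_pos (hrv i) (hrv j)).ne' (mul_pos (hrw i) (hrw j)).ne'] at hT
    linarith
  have li := lift2_li hva
  obtain ⟨bv, hbv⟩ : ∃ b : Module.Basis (Fin 3) ℝ (Fin 3 → ℝ), ∀ i, b i = lift2 (v i) :=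
    ⟨basisOfLinearIndependentOfCardEqFinrank li (by simp [Module.finrank_pi]),
      fun i => congrFun (coe_basisOfLinearIndependentOfCardEqFinrank li
        (by simp [Module.finrank_pi])) i⟩
  have halg : ∀ a b : ℝ, b ≠ 0 → a / b * (a / b * b ^ 2) = a ^ 2 := by
    intro a b hb; field_simp
  refine ⟨bv.constr ℝ (fun i => (rv i / rw i) • lift2 (w i)), ?_, ?_⟩
  · apply mink_basis_ext bv
    intro i j
    rw [bv.constr_basis, bv.constr_basis, hbv i, hbv j]
    rw [mink3_smul_left, mink3_smul_right, mink3_lift, mink3_lift]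
    rcases eq_or_ne i j with rfl | hij
    · rw [real_inner_self_eq_norm_sq, real_inner_self_eq_norm_sq, ← hrv2 i, ← hrw2 i]
      exact halg _ _ (hrw i).ne'
    · have hg := gram i j hij
      have h1 : rw i ≠ 0 := (hrw i).ne'
      have h2 : rw j ≠ 0 := (hrw j).ne'
      rw [inner_E2 (v i) (v j), inner_E2 (w i) (w j)] at hg ⊢
      field_simp
      linear_combination -hg
  · intro i
    refine ⟨rv i / rw i, div_ne_zero (hrv i).ne' (hrw i).ne', ?_⟩
    rw [← hbv i]
    exact bv.constr_basis ℝ _ i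
lemma key_calc {F Qi Qj : ℝ → ℝ} {F' Qi' Qj' : ℝ}
    (hF : HasDerivAt F F' 0) (hQi : HasDerivAt Qi Qi' 0) (hQj : HasDerivAt Qj Qj' 0)
    (hQi0 : 0 < Qi 0) (hQj0 : 0 < Qj 0) (hF0 : F 0 < 0)
    (hdisc : Qi 0 * Qj 0 < F 0 ^ 2)
    (hd : deriv (fun s => Real.log (|F s| / (Real.sqrt (Qi s) * Real.sqrt (Qj s)) +
        Real.sqrt ((|F s| / (Real.sqrt (Qi s) * Real.sqrt (Qj s))) ^ 2 - 1))) 0 = 0) :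
    F' = F 0 * (Qi' / (2 * Qi 0) + Qj' / (2 * Qj 0)) := by
  set a := Real.sqrt (Qi 0) with ha_def
  set b := Real.sqrt (Qj 0) with hb_def
  have ha2 : a ^ 2 = Qi 0 := Real.sq_sqrt hQi0.le
  have hb2 : b ^ 2 = Qj 0 := Real.sq_sqrt hQj0.le
  have ha0 : 0 < a := Real.sqrt_pos.2 hQi0
  have hb0 : 0 < b := Real.sqrt_pos.2 hQj0
  set N : ℝ → ℝ := fun s => -F s / (Real.sqrt (Qi s) * Real.sqrt (Qj s)) with hN_def
  have hN0 : N 0 = -F 0 / (a * b) := rfl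
  have hT0 : 1 < N 0 := by
    rw [hN0, lt_div_iff₀ (mul_pos ha0 hb0), one_mul]
    nlinarith [mul_pos ha0 hb0]
  -- eventual equality
  have hev : ∀ᶠ s in nhds 0, F s < 0 :=
    hF.continuousAt.preimage_mem_nhds (Iio_mem_nhds hF0)
  have heq : (fun s => Real.log (|F s| / (Real.sqrt (Qi s) * Real.sqrt (Qj s)) +
        Real.sqrt ((|F s| / (Real.sqrt (Qi s) * Real.sqrt (Qj s))) ^ 2 - 1)))
      =ᶠ[nhds 0] (fun s => Real.log (N s + Real.sqrt (N s ^ 2 - 1))) := by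
    filter_upwards [hev] with s hs
    rw [abs_of_neg hs]
  -- derivative of N
  have hsqi : HasDerivAt (fun s => Real.sqrt (Qi s)) (1 / (2 * a) * Qi') 0 :=
    (Real.hasDerivAt_sqrt hQi0.ne').comp 0 hQi
  have hsqj : HasDerivAt (fun s => Real.sqrt (Qj s)) (1 / (2 * b) * Qj') 0 :=
    (Real.hasDerivAt_sqrt hQj0.ne').comp 0 hQj
  have hG : HasDerivAt (fun s => Real.sqrt (Qi s) * Real.sqrt (Qj s))
      (1 / (2 * a) * Qi' * b + a * (1 / (2 * b) * Qj')) 0 := hsqi.mul hsqj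
  have hGne : Real.sqrt (Qi 0) * Real.sqrt (Qj 0) ≠ 0 := (mul_pos ha0 hb0).ne'
  have hN : HasDerivAt N
      ((-F' * (a * b) - (-F 0) * (1 / (2 * a) * Qi' * b + a * (1 / (2 * b) * Qj'))) /
        (a * b) ^ 2) 0 := hF.neg.div hG hGne
  -- derivative of φ at T0
  set T0 := N 0 with hT0_def
  have hTsq : (0:ℝ) < T0 ^ 2 - 1 := by nlinarith
  have h1 : HasDerivAt (fun t : ℝ => t ^ 2 - 1) (2 * T0) T0 := by
    simpa using (hasDerivAt_pow 2 T0).sub_const 1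
  have h2 : HasDerivAt (fun t : ℝ => Real.sqrt (t ^ 2 - 1))
      (1 / (2 * Real.sqrt (T0 ^ 2 - 1)) * (2 * T0)) T0 :=
    (Real.hasDerivAt_sqrt hTsq.ne').comp T0 h1
  have h3 : HasDerivAt (fun t : ℝ => t + Real.sqrt (t ^ 2 - 1))
      (1 + 1 / (2 * Real.sqrt (T0 ^ 2 - 1)) * (2 * T0)) T0 := (hasDerivAt_id T0).add h2
  have hpos : 0 < T0 + Real.sqrt (T0 ^ 2 - 1) := by positivity
  have h4 : HasDerivAt (fun t : ℝ => Real.log (t + Real.sqrt (t ^ 2 - 1)))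
      ((T0 + Real.sqrt (T0 ^ 2 - 1))⁻¹ * (1 + 1 / (2 * Real.sqrt (T0 ^ 2 - 1)) * (2 * T0)))
      T0 := by
    simpa [Function.comp_def] using (Real.hasDerivAt_log hpos.ne').comp T0 h3
  have hphi_ne : (T0 + Real.sqrt (T0 ^ 2 - 1))⁻¹ *
      (1 + 1 / (2 * Real.sqrt (T0 ^ 2 - 1)) * (2 * T0)) ≠ 0 := by
    have hs : 0 < Real.sqrt (T0 ^ 2 - 1) := Real.sqrt_pos.2 hTsq
    have : 0 < 1 + 1 / (2 * Real.sqrt (T0 ^ 2 - 1)) * (2 * T0) := by positivity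
    positivity
  have hcomp : HasDerivAt (fun s => Real.log (N s + Real.sqrt (N s ^ 2 - 1)))
      ((T0 + Real.sqrt (T0 ^ 2 - 1))⁻¹ * (1 + 1 / (2 * Real.sqrt (T0 ^ 2 - 1)) * (2 * T0)) *
        ((-F' * (a * b) - (-F 0) * (1 / (2 * a) * Qi' * b + a * (1 / (2 * b) * Qj'))) /
          (a * b) ^ 2)) 0 := by have := h4.comp 0 hN; exact this
  have hzero : ((-F' * (a * b) - (-F 0) * (1 / (2 * a) * Qi' * b + a * (1 / (2 * b) * Qj'))) /
      (a * b) ^ 2) = 0 := by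
    have := heq.deriv_eq
    rw [hd] at this
    have h5 := hcomp.deriv
    rw [← this] at h5
    exact (mul_eq_zero.1 h5.symm).resolve_left hphi_ne
  field_simp at hzero
  rw [← ha2, ← hb2]
  field_simp
  linear_combination (-1 : ℝ) * hzero


lemma part2 (v : Fin 3 → E2) (hv : IsStrictHyperidealTriangle v)
    (γ : ℝ → Fin 3 → E2)
    (hdiff : ∀ i, DifferentiableAt ℝ (fun s => γ s i) 0) (hγ0 : γ 0 = v)
    (hder : ∀ i j, i ≠ j → deriv (fun s => hlen2 (γ s i) (γ s j)) 0 = 0) :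
    ∃ B : (Fin 3 → ℝ) →ₗ[ℝ] (Fin 3 → ℝ),
      (∀ x y, mink3 (B x) y + mink3 x (B y) = 0) ∧
      ∃ c : Fin 3 → ℝ,
        ∀ i, deriv (fun s => lift2 (γ s i)) 0 = B (lift2 (v i)) + c i • lift2 (v i) := by
  obtain ⟨hva, hvn, hvs⟩ := hv
  have hγ0' : ∀ i, γ 0 i = v i := fun i => congrFun hγ0 i
  set d : Fin 3 → E2 := fun i => deriv (fun s => γ s i) 0 with hd_def
  have hd : ∀ i, HasDerivAt (fun s => γ s i) (d i) 0 := fun i => (hdiff i).hasDerivAt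
  have hF : ∀ i j, HasDerivAt (fun s => ⟪γ s i, γ s j⟫ - 1) (⟪v i, d j⟫ + ⟪d i, v j⟫) 0 := by
    intro i j
    have h := ((hd i).inner ℝ (hd j)).sub_const 1
    rwa [hγ0' i, hγ0' j] at h
  have hQ : ∀ i, HasDerivAt (fun s => ‖γ s i‖ ^ 2 - 1) (⟪v i, d i⟫ + ⟪d i, v i⟫) 0 := by
    intro i
    have heq : (fun s => ‖γ s i‖ ^ 2 - 1) = (fun s => ⟪γ s i, γ s i⟫ - 1) := by
      funext s; rw [real_inner_self_eq_norm_sq]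
    rw [heq]; exact hF i i
  have hQv : ∀ i, 0 < ‖v i‖ ^ 2 - 1 := fun i => by nlinarith [hvn i, norm_nonneg (v i)]
  have key : ∀ i j, i ≠ j → ⟪v i, d j⟫ + ⟪d i, v j⟫ =
      (⟪v i, v j⟫ - 1) * ((⟪v i, d i⟫ + ⟪d i, v i⟫) / (2 * (‖v i‖ ^ 2 - 1))
        + (⟪v j, d j⟫ + ⟪d j, v j⟫) / (2 * (‖v j‖ ^ 2 - 1))) := by
    intro i j hij
    obtain ⟨hm, hdisc⟩ := seg_mink hvn hvs hij
    have h := key_calc (hF i j) (hQ i) (hQ j)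
      (by simpa [hγ0'] using hQv i) (by simpa [hγ0'] using hQv j)
      (by simpa [hγ0'] using hm) (by simpa [hγ0'] using hdisc)
      (hder i j hij)
    simpa [hγ0'] using h
  have hQc : ∀ i, 0 < v i 0 ^ 2 + v i 1 ^ 2 - 1 := fun i => by
    have := hQv i; rwa [norm_sq_E2] at this
  have halg : ∀ x y Q1 Q2 : ℝ, Q1 ≠ 0 → Q2 ≠ 0 →
      (x + x) / (2 * Q1) + (y + y) / (2 * Q2) = x / Q1 + y / Q2 := by
    intro x y Q1 Q2 h1 h2; field_simp; ring
  obtain ⟨c, hc⟩ : ∃ c : Fin 3 → ℝ, ∀ i,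
      c i = (d i 0 * v i 0 + d i 1 * v i 1) / (v i 0 ^ 2 + v i 1 ^ 2 - 1) :=
    ⟨_, fun i => rfl⟩
  have hci : ∀ i, c i * (v i 0 ^ 2 + v i 1 ^ 2 - 1) = d i 0 * v i 0 + d i 1 * v i 1 := by
    intro i
    rw [hc i]
    exact div_mul_cancel₀ _ (hQc i).ne'
  have keyc2 : ∀ i j, i ≠ j →
      (v i 0 * d j 0 + v i 1 * d j 1) + (d i 0 * v j 0 + d i 1 * v j 1) =
      (v i 0 * v j 0 + v i 1 * v j 1 - 1) * (c i + c j) := by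
    intro i j hij
    have hc' : ∀ k, (v k 0 * d k 0 + v k 1 * d k 1) / (v k 0 ^ 2 + v k 1 ^ 2 - 1) = c k := by
      intro k; rw [hc k]; congr 1; ring
    have h := key i j hij
    rw [real_inner_comm (v i) (d i), real_inner_comm (v j) (d j),
      halg _ _ _ _ (hQv i).ne' (hQv j).ne'] at h
    rw [inner_E2, inner_E2, inner_E2, inner_E2, inner_E2,
      norm_sq_E2, norm_sq_E2, hc' i, hc' j] at h
    exact h
  have hlift : ∀ i, HasDerivAt (fun s => lift2 (γ s i)) ![0, d i 0, d i 1] 0 := by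
    intro i
    have h0 : HasDerivAt (fun s => γ s i 0) (d i 0) 0 := by
      simpa [Function.comp_def] using (EuclideanSpace.proj (0 : Fin 2) : E2 →L[ℝ] ℝ).hasFDerivAt.comp_hasDerivAt
        0 (hd i)
    have h1 : HasDerivAt (fun s => γ s i 1) (d i 1) 0 := by
      simpa [Function.comp_def] using (EuclideanSpace.proj (1 : Fin 2) : E2 →L[ℝ] ℝ).hasFDerivAt.comp_hasDerivAt
        0 (hd i)
    rw [hasDerivAt_pi]
    intro k
    fin_cases k
    · simpa [lift2] using hasDerivAt_const (0 : ℝ) (1 : ℝ)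
    · simpa [lift2] using h0
    · simpa [lift2] using h1
  have li := lift2_li hva
  obtain ⟨b, hb⟩ : ∃ b : Module.Basis (Fin 3) ℝ (Fin 3 → ℝ), ∀ i, b i = lift2 (v i) :=
    ⟨basisOfLinearIndependentOfCardEqFinrank li (by simp [Module.finrank_pi]),
      fun i => congrFun (coe_basisOfLinearIndependentOfCardEqFinrank li
        (by simp [Module.finrank_pi])) i⟩
  refine ⟨b.constr ℝ (fun i => ![0, d i 0, d i 1] - c i • lift2 (v i)), ?_, c, ?_⟩
  · apply mink_skew_ext b
    intro i j
    rw [b.constr_basis, b.constr_basis, hb i, hb j]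
    have e1 : (![0, d i 0, d i 1] - c i • lift2 (v i) : Fin 3 → ℝ) =
        ![0 - c i * 1, d i 0 - c i * v i 0, d i 1 - c i * v i 1] := by
      funext k; fin_cases k <;> simp [lift2]
    have e2 : (![0, d j 0, d j 1] - c j • lift2 (v j) : Fin 3 → ℝ) =
        ![0 - c j * 1, d j 0 - c j * v j 0, d j 1 - c j * v j 1] := by
      funext k; fin_cases k <;> simp [lift2]
    rw [e1, e2]
    simp only [mink3, lift2, Matrix.cons_val_zero, Matrix.cons_val_one, Matrix.head_cons,
      Matrix.cons_val_two, Matrix.tail_cons]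
    rcases eq_or_ne i j with rfl | hij
    · linear_combination -2 * hci i
    · linear_combination keyc2 i j hij
  · intro i
    rw [(hlift i).deriv, ← hb i, b.constr_basis]
    rw [hb i]
    exact (sub_add_cancel _ _).symm

/-- A strictly hyperideal triangle is determined, up to isometries of `H²` extended to
the projective plane (projective transformations induced by Lorentz transformations of
`ℝ³` acting on homogeneous lifts), by its three edge lengths; moreover it admits no
nontrivial infinitesimal deformation preserving the edge lengths: any first-order
deformation preserving the edge lengths is induced by an infinitesimal Lorentz
transformation (a `mink3`-skew endomorphism) acting on the homogeneous lifts, up to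
projective rescaling. -/
theorem stmt_9 (l : Fin 3 → Fin 3 → ℝ) (hl : ∀ i j, i ≠ j → 0 < l i j) :
    (∀ v w : Fin 3 → E2,
      IsStrictHyperidealTriangle v → IsStrictHyperidealTriangle w →
      (∀ i j, i ≠ j → hlen2 (v i) (v j) = l i j) →
      (∀ i j, i ≠ j → hlen2 (w i) (w j) = l i j) →
      ∃ g : (Fin 3 → ℝ) →ₗ[ℝ] (Fin 3 → ℝ),
        (∀ x y, mink3 (g x) (g y) = mink3 x y) ∧
        ∀ i, ∃ c : ℝ, c ≠ 0 ∧ g (lift2 (v i)) = c • lift2 (w i)) ∧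
    (∀ v : Fin 3 → E2, IsStrictHyperidealTriangle v →
      ∀ γ : ℝ → Fin 3 → E2,
        (∀ i, DifferentiableAt ℝ (fun s => γ s i) 0) → γ 0 = v →
        (∀ i j, i ≠ j → deriv (fun s => hlen2 (γ s i) (γ s j)) 0 = 0) →
        ∃ B : (Fin 3 → ℝ) →ₗ[ℝ] (Fin 3 → ℝ),
          (∀ x y, mink3 (B x) y + mink3 x (B y) = 0) ∧
          ∃ c : Fin 3 → ℝ,
            ∀ i, deriv (fun s => lift2 (γ s i)) 0 = B (lift2 (v i)) + c i • lift2 (v i)) := by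
  constructor
  · intro v w hv hw hLv hLw
    exact part1 v w hv hw (fun i j hij => (hLv i j hij).trans (hLw i j hij).symm)
  · intro v hv γ hdiff hγ0 hder
    exact part2 v hv γ hdiff hγ0 hder
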